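/- Let |N⟩ := (1/√6)(-|0⟩ + 2|1⟩ - |2⟩) in ℂ³ (the qutrit Norrell state), |+⟩ := (1/√3)(|0⟩+|1⟩+|2⟩), |xz'⟩ := (1/√3)(|0⟩ + e^{2πi/3}|1⟩ + |2⟩), and |xzz'⟩ := (1/√3)(|0⟩ + e^{-2πi/3}|1⟩ + |2⟩). Then |N⟩⟨N| + (1/2)|+⟩⟨+| = (1/2)(|1⟩⟨1| + |xz'⟩⟨xz'| + |xzz'⟩⟨xzz'|), and moreover |⟨N|xzz'⟩|² = 2/3. -/

import Mathlib

open Matrix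

/-- The qutrit Norrell state |N⟩ = (-|0⟩ + 2|1⟩ - |2⟩)/√6. -/
noncomputable def norrell : Fin 3 → ℂ :=
  ![-((Real.sqrt 6 : ℝ) : ℂ)⁻¹, 2 * ((Real.sqrt 6 : ℝ) : ℂ)⁻¹, -((Real.sqrt 6 : ℝ) : ℂ)⁻¹]

/-- |+⟩ = (|0⟩ + |1⟩ + |2⟩)/√3. -/
noncomputable def plusState : Fin 3 → ℂ :=
  ![((Real.sqrt 3 : ℝ) : ℂ)⁻¹, ((Real.sqrt 3 : ℝ) : ℂ)⁻¹, ((Real.sqrt 3 : ℝ) : ℂ)⁻¹]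

/-- |xz'⟩ = (|0⟩ + e^{2πi/3}|1⟩ + |2⟩)/√3. -/
noncomputable def xzState : Fin 3 → ℂ :=
  ![((Real.sqrt 3 : ℝ) : ℂ)⁻¹,
    ((Real.sqrt 3 : ℝ) : ℂ)⁻¹ * Complex.exp (2 * Real.pi * Complex.I / 3),
    ((Real.sqrt 3 : ℝ) : ℂ)⁻¹]

/-- |xzz'⟩ = (|0⟩ + e^{-2πi/3}|1⟩ + |2⟩)/√3. -/
noncomputable def xzzState : Fin 3 → ℂ :=
  ![((Real.sqrt 3 : ℝ) : ℂ)⁻¹,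
    ((Real.sqrt 3 : ℝ) : ℂ)⁻¹ * Complex.exp (-(2 * Real.pi * Complex.I / 3)),
    ((Real.sqrt 3 : ℝ) : ℂ)⁻¹]

/-- |1⟩. -/
noncomputable def ket1 : Fin 3 → ℂ := ![0, 1, 0]

set_option maxHeartbeats 2000000 in
/-- the operator identity
|N⟩⟨N| + (1/2)|+⟩⟨+| = (1/2)(|1⟩⟨1| + |xz'⟩⟨xz'| + |xzz'⟩⟨xzz'|),
and the overlap |⟨N|xzz'⟩|² = 2/3. -/
theorem norrell_state_decomposition :
    Matrix.vecMulVec norrell (star norrell) +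
        ((1 / 2 : ℂ)) • Matrix.vecMulVec plusState (star plusState) =
      ((1 / 2 : ℂ)) • (Matrix.vecMulVec ket1 (star ket1) +
        Matrix.vecMulVec xzState (star xzState) +
        Matrix.vecMulVec xzzState (star xzzState)) ∧
      ‖dotProduct (star norrell) xzzState‖ ^ 2 = 2 / 3 := by
  have hω : Complex.exp (2 * Real.pi * Complex.I / 3)
      = -1/2 + ((Real.sqrt 3 / 2 : ℝ) : ℂ) * Complex.I := by
    have h : (2 * Real.pi * Complex.I / 3) = ((2 * Real.pi / 3 : ℝ) : ℂ) * Complex.I := by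
      push_cast; ring
    have hc : Real.cos (2 * Real.pi / 3) = -(1/2) := by
      rw [show (2 * Real.pi / 3) = Real.pi - Real.pi/3 by ring, Real.cos_pi_sub,
        Real.cos_pi_div_three]
    have hs : Real.sin (2 * Real.pi / 3) = Real.sqrt 3 / 2 := by
      rw [show (2 * Real.pi / 3) = Real.pi - Real.pi/3 by ring, Real.sin_pi_sub,
        Real.sin_pi_div_three]
    rw [h, Complex.exp_mul_I, ← Complex.ofReal_cos, ← Complex.ofReal_sin, hc, hs]
    push_cast; ring
  have hω' : Complex.exp (-(2 * Real.pi * Complex.I / 3))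
      = -1/2 - ((Real.sqrt 3 / 2 : ℝ) : ℂ) * Complex.I := by
    have h : (-(2 * Real.pi * Complex.I / 3)) = ((-(2 * Real.pi / 3) : ℝ) : ℂ) * Complex.I := by
      push_cast; ring
    have hc : Real.cos (-(2 * Real.pi / 3)) = -(1/2) := by
      rw [Real.cos_neg, show (2 * Real.pi / 3) = Real.pi - Real.pi/3 by ring, Real.cos_pi_sub,
        Real.cos_pi_div_three]
    have hs : Real.sin (-(2 * Real.pi / 3)) = -(Real.sqrt 3 / 2) := by
      rw [Real.sin_neg, show (2 * Real.pi / 3) = Real.pi - Real.pi/3 by ring, Real.sin_pi_sub,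
        Real.sin_pi_div_three]
    rw [h, Complex.exp_mul_I, ← Complex.ofReal_cos, ← Complex.ofReal_sin, hc, hs]
    push_cast; ring
  have h3 : ((Real.sqrt 3 : ℝ) : ℂ) * ((Real.sqrt 3 : ℝ) : ℂ) = 3 := by
    rw [← Complex.ofReal_mul, Real.mul_self_sqrt (by norm_num)]; norm_num
  have h6 : ((Real.sqrt 6 : ℝ) : ℂ) * ((Real.sqrt 6 : ℝ) : ℂ) = 6 := by
    rw [← Complex.ofReal_mul, Real.mul_self_sqrt (by norm_num)]; norm_num
  have h3' : ((Real.sqrt 3 : ℝ) : ℂ) ≠ 0 := by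
    simp [Real.sqrt_eq_zero']
  have h6' : ((Real.sqrt 6 : ℝ) : ℂ) ≠ 0 := by
    simp [Real.sqrt_eq_zero']
  constructor
  · ext i j
    rw [Matrix.add_apply, Matrix.smul_apply, Matrix.smul_apply, Matrix.add_apply,
      Matrix.add_apply, Matrix.vecMulVec_apply, Matrix.vecMulVec_apply, Matrix.vecMulVec_apply,
      Matrix.vecMulVec_apply, Matrix.vecMulVec_apply]
    fin_cases i <;> fin_cases j <;>
      simp only [norrell, plusState, xzState, xzzState, ket1, Pi.star_apply,
        Fin.zero_eta, Fin.mk_one, Fin.reduceFinMk, Matrix.cons_val_zero, Matrix.cons_val_one, Matrix.head_cons, Matrix.cons_val_two,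
        Matrix.tail_cons, hω, hω', star_mul', star_neg, star_inv₀, Complex.star_def,
        Complex.conj_ofReal, map_add, map_sub, _root_.map_mul, map_div₀, map_ofNat,
        _root_.map_one, Complex.conj_I, map_neg] <;>
      field_simp <;>
      ring_nf <;>
      simp only [show ((Real.sqrt 3 : ℝ):ℂ)^2 = 3 by rw [sq, h3],
        show ((Real.sqrt 3 : ℝ):ℂ)^4 = 9 by
          rw [show (4:ℕ)=2*2 from rfl, pow_mul, sq, sq, h3]; norm_num,
        show ((Real.sqrt 6 : ℝ):ℂ)^2 = 6 by rw [sq, h6],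
        Complex.I_sq, Complex.conj_ofNat] <;> norm_num [mul_pow, show ((Real.sqrt 3 : ℝ):ℂ)^2 = 3 by rw [sq, h3]]
  · have hdot : dotProduct (star norrell) xzzState
        = ((Real.sqrt 6 : ℝ) : ℂ)⁻¹ * ((Real.sqrt 3 : ℝ) : ℂ)⁻¹ *
          (-3 - ((Real.sqrt 3 : ℝ) : ℂ) * Complex.I) := by
      simp only [dotProduct, Fin.sum_univ_three, norrell, xzzState, Pi.star_apply,
        Matrix.cons_val_zero, Matrix.cons_val_one, Matrix.head_cons, Matrix.cons_val_two,
        Matrix.tail_cons, hω', star_mul', star_neg, star_inv₀, Complex.star_def,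
        Complex.conj_ofReal, map_ofNat, _root_.map_mul, map_neg, map_inv₀, map_sub,
        map_add, Complex.conj_I]
      push_cast
      ring
    rw [hdot, Complex.sq_norm]
    simp only [Complex.normSq_mul, Complex.normSq_inv]
    rw [show Complex.normSq ((Real.sqrt 6 : ℝ) : ℂ) = 6 by
        rw [Complex.normSq_ofReal, Real.mul_self_sqrt (by norm_num)],
      show Complex.normSq ((Real.sqrt 3 : ℝ) : ℂ) = 3 by
        rw [Complex.normSq_ofReal, Real.mul_self_sqrt (by norm_num)]]
    rw [show Complex.normSq (-3 - ((Real.sqrt 3 : ℝ) : ℂ) * Complex.I) = 12 by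
      simp [Complex.normSq_apply]
      nlinarith [Real.mul_self_sqrt (show (0:ℝ) ≤ 3 by norm_num)]]
    norm_num
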